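/- Assume the Common Givens: P_i is a preference order on C consistent with Q; the query is the pair (c_j,c_k) with P_i(c_j,c_k); neither (c_j,c_k) nor (c_k,c_j) belongs to Q; and PW = {pw_1,…,pw_l} is a nonempty set of possible winners enumerated in decreasing order of P_i, i.e. P_i(pw_a,pw_b) if and only if a < b. Suppose there exists a preference order P' ≠ P_i such that P' locally dominates P_i (given PW) and P' ∈ μ(P_i). Then one of the following three cases holds in P_i: (1) P_i(c_j,pw_1) and P_i(pw_l,c_k); or (2) P_i(c_j,pw_1) and c_k ∈ [pw_1, P_i, pw_l]; or (3) P_i(pw_l,c_k) and c_j ∈ [pw_1, P_i, pw_l]. -/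
import Mathlib


/-- A preference order: a strict total order on candidates. -/
def IsPref {C : Type*} (P : C → C → Prop) : Prop :=
  (∀ a b : C, a ≠ b → P a b ∨ P b a) ∧ (∀ a : C, ¬ P a a) ∧
    ∀ a b c : C, P a b → P b c → P a c

/-- The Borda score that preference order `P` gives candidate `c`. -/
noncomputable def borda {C : Type*} [Fintype C] (P : C → C → Prop) (c : C) : ℕ :=
  1 + Set.ncard {c' : C | P c c'}

/-- `c` is the outcome `F(s, P)`: it beats every other candidate either in total score
`s + borda`, or on equal total score by the tie-breaking order `tb`. -/
def IsWinner {C : Type*} [Fintype C] (tb : C → C → Prop) (s : C → ℕ)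
    (P : C → C → Prop) (c : C) : Prop :=
  ∀ c' : C, c' ≠ c →
    s c' + borda P c' < s c + borda P c ∨
      (s c' + borda P c' = s c + borda P c ∧ tb c c')

/-- `s` is a possible world for the set `PW` of possible winners. -/
def PossibleWorld {C : Type*} [Fintype C] (tb : C → C → Prop) (PW : Set C)
    (s : C → ℕ) : Prop :=
  ∀ R : C → C → Prop, IsPref R → ∀ c : C, IsWinner tb s R c → c ∈ PW

/-- `P'` locally dominates `P` given the possible-winner set `PW`. -/
def LocDom {C : Type*} [Fintype C] (tb : C → C → Prop) (PW : Set C)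
    (P' P : C → C → Prop) : Prop :=
  (∀ s : C → ℕ, PossibleWorld tb PW s →
      ∀ w' w : C, IsWinner tb s P' w' → IsWinner tb s P w → w' = w ∨ P w' w) ∧
  ∃ s : C → ℕ, PossibleWorld tb PW s ∧
      ∃ w' w : C, IsWinner tb s P' w' ∧ IsWinner tb s P w ∧ P w' w

/-- The (closed) segment `[c, P, c']` of candidates between `c` and `c'`. -/
def seg {C : Type*} (P : C → C → Prop) (c c' : C) : Set C :=
  {d : C | (d = c ∨ P c d) ∧ (d = c' ∨ P d c')}

/-- `Q` is a strict partial order (consistent, transitively closed reported preferences). -/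
def IsSPO {C : Type*} (Q : C → C → Prop) : Prop :=
  (∀ a : C, ¬ Q a a) ∧ ∀ a b c : C, Q a b → Q b c → Q a c

/-- `P` is consistent with (extends) the reported preferences `Q`, written `P ⊨ Q`. -/
def Extends {C : Type*} (P Q : C → C → Prop) : Prop := ∀ a b : C, Q a b → P a b

/-- The swap distance between two preference orders: the number of (unordered) pairs of
candidates ordered differently, counted here as ordered pairs `(a, b)` with
`P a b` and `P' b a`. -/
noncomputable def dswap {C : Type*} [Fintype C] (P P' : C → C → Prop) : ℕ :=
  Set.ncard {p : C × C | P p.1 p.2 ∧ P' p.2 p.1}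

/-- `P` is a preference order consistent with the transitive closure of `Q ∪ {(ck, cj)}`
(for a transitive total order this is the same as extending `Q` and putting `ck` above `cj`). -/
def Feasible {C : Type*} (Q : C → C → Prop) (cj ck : C) (P : C → C → Prop) : Prop :=
  IsPref P ∧ Extends P Q ∧ P ck cj

/-- `P ∈ μ(Pi)`: among all preference orders consistent with the transitive closure of
`Q ∪ {(ck, cj)}`, `P` minimizes the swap distance to `Pi`. -/
def InMu {C : Type*} [Fintype C] (Q : C → C → Prop) (cj ck : C)
    (Pi P : C → C → Prop) : Prop :=
  Feasible Q cj ck P ∧ ∀ R : C → C → Prop, Feasible Q cj ck R → dswap Pi P ≤ dswap Pi R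

theorem statement6 {C : Type*} [Fintype C]
    (tb : C → C → Prop) (htb : IsPref tb)
    (Q : C → C → Prop) (hQ : IsSPO Q)
    (Pi : C → C → Prop) (hPi : IsPref Pi) (hPiQ : Extends Pi Q)
    (cj ck : C) (hjk : Pi cj ck) (hQjk : ¬ Q cj ck) (hQkj : ¬ Q ck cj)
    (l : ℕ) (hl : 0 < l) (pw : Fin l → C) (hinj : Function.Injective pw)
    (horder : ∀ a b : Fin l, Pi (pw a) (pw b) ↔ a < b)
    (hman : ∃ P' : C → C → Prop, P' ≠ Pi ∧
      LocDom tb (Set.range pw) P' Pi ∧ InMu Q cj ck Pi P') :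
    (Pi cj (pw ⟨0, hl⟩) ∧ Pi (pw ⟨l - 1, by omega⟩) ck) ∨
      (Pi cj (pw ⟨0, hl⟩) ∧ ck ∈ seg Pi (pw ⟨0, hl⟩) (pw ⟨l - 1, by omega⟩)) ∨
      (Pi (pw ⟨l - 1, by omega⟩) ck ∧ cj ∈ seg Pi (pw ⟨0, hl⟩) (pw ⟨l - 1, by omega⟩)) := by
  classical
  obtain ⟨P', hne, ⟨hdom1, hdom2⟩, ⟨⟨hP'pref, hP'Q, hP'kj⟩, hmin⟩⟩ := hman
  obtain ⟨hPit, hPiirr, hPitr⟩ := hPi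
  obtain ⟨hP't, hP'irr, hP'tr⟩ := hP'pref
  obtain ⟨htbt, htbirr, htbtr⟩ := htb
  have hl1 : l - 1 < l := by omega
  have hPiasym : ∀ a b : C, Pi a b → ¬ Pi b a := fun a b h h' => hPiirr a (hPitr _ _ _ h h')
  have hSmem : ∀ d : C, d ∈ seg Pi cj ck ↔ (d = cj ∨ Pi cj d) ∧ (d = ck ∨ Pi d ck) :=
    fun d => Iff.rfl
  have hcjS : cj ∈ seg Pi cj ck := ⟨Or.inl rfl, Or.inr hjk⟩
  have hckS : ck ∈ seg Pi cj ck := ⟨Or.inr hjk, Or.inl rfl⟩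
  -- candidates outside the segment are entirely above or entirely below it
  have hout : ∀ x : C, x ∉ seg Pi cj ck →
      (∀ y ∈ seg Pi cj ck, Pi x y) ∨ (∀ y ∈ seg Pi cj ck, Pi y x) := by
    intro x hx
    rw [hSmem] at hx
    by_cases h1 : x = cj ∨ Pi cj x
    · right
      have h2 : ¬(x = ck ∨ Pi x ck) := fun h => hx ⟨h1, h⟩
      push_neg at h2
      have hckx : Pi ck x := (hPit x ck h2.1).resolve_left h2.2
      intro y hy
      rcases ((hSmem y).1 hy).2 with e | e
      · exact e ▸ hckx
      · exact hPitr _ _ _ e hckx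
    · left
      push_neg at h1
      have hxcj : Pi x cj := (hPit x cj h1.1).resolve_right h1.2
      intro y hy
      rcases ((hSmem y).1 hy).1 with e | e
      · exact e ▸ hxcj
      · exact hPitr _ _ _ hxcj e
  -- L1: every pair flipped by P' lies inside the segment
  have hL1 : ∀ a b : C, Pi a b → P' b a → a ∈ seg Pi cj ck ∧ b ∈ seg Pi cj ck := by
    intro a b hab hba
    by_contra hcon
    obtain ⟨R, hRpos, hRneg⟩ : ∃ R : C → C → Prop,
        (∀ x y : C, (x ∈ seg Pi cj ck ∧ y ∈ seg Pi cj ck) → (R x y ↔ P' x y)) ∧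
        (∀ x y : C, ¬(x ∈ seg Pi cj ck ∧ y ∈ seg Pi cj ck) → (R x y ↔ Pi x y)) :=
      ⟨fun x y => ((x ∈ seg Pi cj ck ∧ y ∈ seg Pi cj ck) ∧ P' x y) ∨
          (¬(x ∈ seg Pi cj ck ∧ y ∈ seg Pi cj ck) ∧ Pi x y),
        fun x y h => by simp only []; tauto, fun x y h => by simp only []; tauto⟩
    have hRtot : ∀ x y : C, x ≠ y → R x y ∨ R y x := by
      intro x y hxy
      by_cases h : x ∈ seg Pi cj ck ∧ y ∈ seg Pi cj ck
      · rcases hP't x y hxy with h' | h'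
        · exact Or.inl ((hRpos x y h).2 h')
        · exact Or.inr ((hRpos y x ⟨h.2, h.1⟩).2 h')
      · have h' : ¬(y ∈ seg Pi cj ck ∧ x ∈ seg Pi cj ck) := fun hh => h ⟨hh.2, hh.1⟩
        rcases hPit x y hxy with hh | hh
        · exact Or.inl ((hRneg x y h).2 hh)
        · exact Or.inr ((hRneg y x h').2 hh)
    have hRirr : ∀ x : C, ¬ R x x := by
      intro x hx
      by_cases h : x ∈ seg Pi cj ck ∧ x ∈ seg Pi cj ck
      · exact hP'irr x ((hRpos x x h).1 hx)
      · exact hPiirr x ((hRneg x x h).1 hx)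
    have hRtr : ∀ x y z : C, R x y → R y z → R x z := by
      intro x y z hxy hyz
      by_cases hx : x ∈ seg Pi cj ck
      · by_cases hy : y ∈ seg Pi cj ck
        · by_cases hz : z ∈ seg Pi cj ck
          · exact (hRpos x z ⟨hx, hz⟩).2 (hP'tr _ _ _ ((hRpos x y ⟨hx, hy⟩).1 hxy)
              ((hRpos y z ⟨hy, hz⟩).1 hyz))
          · have hyz' : Pi y z := (hRneg y z (fun h => hz h.2)).1 hyz
            have hzall : ∀ w ∈ seg Pi cj ck, Pi w z := by
              rcases hout z hz with h | h
              · exact absurd (h y hy) (hPiasym _ _ hyz')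
              · exact h
            exact (hRneg x z (fun h => hz h.2)).2 (hzall x hx)
        · have hxy' : Pi x y := (hRneg x y (fun h => hy h.2)).1 hxy
          have hyz' : Pi y z := (hRneg y z (fun h => hy h.1)).1 hyz
          have hyall : ∀ w ∈ seg Pi cj ck, Pi w y := by
            rcases hout y hy with h | h
            · exact absurd (h x hx) (hPiasym _ _ hxy')
            · exact h
          by_cases hz : z ∈ seg Pi cj ck
          · exact absurd hyz' (hPiasym _ _ (hyall z hz))
          · exact (hRneg x z (fun h => hz h.2)).2 (hPitr _ _ _ hxy' hyz')
      · have hxy' : Pi x y := (hRneg x y (fun h => hx h.1)).1 hxy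
        by_cases hy : y ∈ seg Pi cj ck
        · have hxall : ∀ w ∈ seg Pi cj ck, Pi x w := by
            rcases hout x hx with h | h
            · exact h
            · exact absurd hxy' (hPiasym _ _ (h y hy))
          by_cases hz : z ∈ seg Pi cj ck
          · exact (hRneg x z (fun h => hx h.1)).2 (hxall z hz)
          · have hyz' : Pi y z := (hRneg y z (fun h => hz h.2)).1 hyz
            have hzall : ∀ w ∈ seg Pi cj ck, Pi w z := by
              rcases hout z hz with h | h
              · exact absurd (h y hy) (hPiasym _ _ hyz')
              · exact h
            exact (hRneg x z (fun h => hx h.1)).2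
              (hPitr _ _ _ (hxall cj hcjS) (hzall cj hcjS))
        · have hyz' : Pi y z := (hRneg y z (fun h => hy h.1)).1 hyz
          exact (hRneg x z (fun h => hx h.1)).2 (hPitr _ _ _ hxy' hyz')
    have hRfeas : Feasible Q cj ck R := by
      refine ⟨⟨hRtot, hRirr, hRtr⟩, ?_, ?_⟩
      · intro a' b' hq
        by_cases h : a' ∈ seg Pi cj ck ∧ b' ∈ seg Pi cj ck
        · exact (hRpos _ _ h).2 (hP'Q _ _ hq)
        · exact (hRneg _ _ h).2 (hPiQ _ _ hq)
      · exact (hRpos ck cj ⟨hckS, hcjS⟩).2 hP'kj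
    have hsub : {p : C × C | Pi p.1 p.2 ∧ R p.2 p.1} ⊆ {p : C × C | Pi p.1 p.2 ∧ P' p.2 p.1} := by
      rintro ⟨x, y⟩ ⟨hxy, hRyx⟩
      refine ⟨hxy, ?_⟩
      by_cases h : y ∈ seg Pi cj ck ∧ x ∈ seg Pi cj ck
      · exact (hRpos _ _ h).1 hRyx
      · exact absurd ((hRneg _ _ h).1 hRyx) (hPiasym _ _ hxy)
    have hmem : (⟨a, b⟩ : C × C) ∈ {p : C × C | Pi p.1 p.2 ∧ P' p.2 p.1} := ⟨hab, hba⟩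
    have hnot : (⟨a, b⟩ : C × C) ∉ {p : C × C | Pi p.1 p.2 ∧ R p.2 p.1} := by
      rintro ⟨-, hRba⟩
      exact hPiasym _ _ hab ((hRneg b a (fun h => hcon ⟨h.2, h.1⟩)).1 hRba)
    have hss : {p : C × C | Pi p.1 p.2 ∧ R p.2 p.1} ⊂ {p : C × C | Pi p.1 p.2 ∧ P' p.2 p.1} :=
      (Set.ssubset_iff_of_subset hsub).2 ⟨⟨a, b⟩, hmem, hnot⟩
    have hlt : dswap Pi R < dswap Pi P' := Set.ncard_lt_ncard hss (Set.toFinite _)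
    exact absurd (hmin R hRfeas) (by omega)
  -- borda agrees outside the segment
  have hBoff : ∀ c : C, c ∉ seg Pi cj ck → borda P' c = borda Pi c := by
    intro c hc
    unfold borda
    congr 1
    apply congrArg
    ext d
    simp only [Set.mem_setOf_eq]
    constructor
    · intro h
      by_contra h'
      have hdc : c ≠ d := fun e => hP'irr c (e ▸ h)
      have hPidc : Pi d c := (hPit c d hdc).resolve_left h'
      exact hc (hL1 d c hPidc h).2
    · intro h
      by_contra h'
      have hdc : c ≠ d := fun e => hPiirr c (e ▸ h)
      have hPdc : P' d c := (hP't c d hdc).resolve_left h'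
      exact hc (hL1 c d h hPdc).1
  -- cj only loses, ck only gains
  have hCj : borda P' cj ≤ borda Pi cj := by
    have hsub : {d : C | P' cj d} ⊆ {d : C | Pi cj d} := by
      intro d hd
      by_contra h'
      have hdc : cj ≠ d := fun e => hP'irr cj (e ▸ hd)
      have hPidc : Pi d cj := (hPit cj d hdc).resolve_left h'
      rcases ((hSmem d).1 (hL1 d cj hPidc hd).1).1 with e | e
      · exact hdc e.symm
      · exact hPiasym _ _ e hPidc
    exact Nat.add_le_add_left (Set.ncard_le_ncard hsub (Set.toFinite _)) 1
  have hCk : borda Pi ck ≤ borda P' ck := by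
    have hsub : {d : C | Pi ck d} ⊆ {d : C | P' ck d} := by
      intro d hd
      by_contra h'
      have hdc : ck ≠ d := fun e => hPiirr ck (e ▸ hd)
      have hPdc : P' d ck := (hP't ck d hdc).resolve_left h'
      rcases ((hSmem d).1 (hL1 ck d hd hPdc).2).2 with e | e
      · exact hdc e.symm
      · exact hPiasym _ _ hd e
    exact Nat.add_le_add_left (Set.ncard_le_ncard hsub (Set.toFinite _)) 1
  -- borda bounds
  have hbub : ∀ (P : C → C → Prop) (c : C), borda P c ≤ Fintype.card C + 1 := by
    intro P c
    have h1 : {c' : C | P c c'}.ncard ≤ Fintype.card C := by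
      have := Set.ncard_le_ncard (Set.subset_univ {c' : C | P c c'}) Set.finite_univ
      simpa [Set.ncard_univ, Nat.card_eq_fintype_card] using this
    unfold borda
    omega
  have hblb : ∀ (P : C → C → Prop) (c : C), 1 ≤ borda P c := by
    intro P c
    unfold borda
    omega
  -- if borda is unchanged on all possible winners, we contradict the strict part of LocDom
  have hW : (∀ a : Fin l, borda P' (pw a) = borda Pi (pw a)) → False := by
    intro heq
    obtain ⟨s, hs, w', w, hw', hw, hPww⟩ := hdom2
    have hwPW : w ∈ Set.range pw := hs Pi ⟨hPit, hPiirr, hPitr⟩ w hw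
    have hw'PW : w' ∈ Set.range pw := hs P' ⟨hP't, hP'irr, hP'tr⟩ w' hw'
    have hne' : w ≠ w' := fun h => hPiirr w' (h ▸ hPww)
    obtain ⟨a, ha⟩ := hwPW
    obtain ⟨b, hb⟩ := hw'PW
    have e1 : borda P' w = borda Pi w := ha ▸ heq a
    have e2 : borda P' w' = borda Pi w' := hb ▸ heq b
    rcases hw' w hne' with h1 | ⟨h1, htb1⟩ <;>
      rcases hw w' (Ne.symm hne') with h2 | ⟨h2, htb2⟩
    · omega
    · omega
    · omega
    · exact htbirr w (htbtr w w' w htb2 htb1)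
  -- construction: a relative gain by a lower possible winner contradicts dominance
  have hCon : ∀ u v : C, u ∈ Set.range pw → v ∈ Set.range pw → Pi v u →
      borda P' v + borda Pi u < borda P' u + borda Pi v → False := by
    intro u v hu hv hvu hkey
    have huv : u ≠ v := fun h => hPiirr v (h ▸ hvu)
    set n := Fintype.card C with hn
    set T : ℕ := 7 * n + 50 with hT
    set M : ℕ := n + 10 with hM
    set d : ℕ := if tb u v then 1 else 0 with hd
    have hdle : d ≤ 1 := by rw [hd]; split <;> omega
    set s : C → ℕ := fun c =>
      if c = v then T - borda Pi v
      else if c = u then T - d - borda Pi u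
      else if c ∈ Set.range pw then M else 0 with hsdef
    have hsv : s v = T - borda Pi v := by simp [hsdef]
    have hsu : s u = T - d - borda Pi u := by simp [hsdef, huv]
    have hsPW : ∀ c : C, c ≠ u → c ≠ v → c ∈ Set.range pw → s c = M := by
      intro c h1 h2 h3
      simp only [hsdef]
      rw [if_neg h2, if_neg h1, if_pos h3]
    have hsout : ∀ c : C, c ∉ Set.range pw → s c = 0 := by
      intro c h
      have h1 : c ≠ u := fun e => h (e ▸ hu)
      have h2 : c ≠ v := fun e => h (e ▸ hv)
      simp only [hsdef]
      rw [if_neg h2, if_neg h1, if_neg h]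
    have hbuPi := hbub Pi u
    have hbvPi := hbub Pi v
    have hbuP' := hbub P' u
    have hbvP' := hbub P' v
    have hpwworld : PossibleWorld tb (Set.range pw) s := by
      intro R hR c hc
      by_contra hcPW
      have h0 : s c = 0 := hsout c hcPW
      have hvc : v ≠ c := fun h => hcPW (h ▸ hv)
      have hbc := hbub R c
      have hbv := hblb R v
      rcases hc v hvc with hlt | ⟨heq, -⟩
      · rw [hsv, h0] at hlt; omega
      · rw [hsv, h0] at heq; omega
    have hwinv : IsWinner tb s Pi v := by
      intro c' hc'
      by_cases hcu : c' = u
      · rw [hcu]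
        by_cases htbuv : tb u v
        · have hd1 : d = 1 := by rw [hd, if_pos htbuv]
          left; rw [hsu, hsv]; omega
        · have hd0 : d = 0 := by rw [hd, if_neg htbuv]
          right
          refine ⟨by rw [hsu, hsv]; omega, ?_⟩
          exact (htbt v u (Ne.symm huv)).resolve_right htbuv
      · by_cases hcr : c' ∈ Set.range pw
        · left
          rw [hsPW c' hcu hc' hcr, hsv]
          have := hbub Pi c'
          have := hblb Pi v
          omega
        · left
          rw [hsout c' hcr, hsv]
          have := hbub Pi c'
          have := hblb Pi v
          omega
    have hwinu : IsWinner tb s P' u := by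
      intro c' hc'
      by_cases hcv : c' = v
      · rw [hcv]
        by_cases htbuv : tb u v
        · have hd1 : d = 1 := by rw [hd, if_pos htbuv]
          have hcmp : s v + borda P' v < s u + borda P' u ∨
              s v + borda P' v = s u + borda P' u := by
            rw [hsu, hsv]; omega
          rcases hcmp with h | h
          · exact Or.inl h
          · exact Or.inr ⟨h, htbuv⟩
        · have hd0 : d = 0 := by rw [hd, if_neg htbuv]
          left; rw [hsu, hsv]; omega
      · by_cases hcr : c' ∈ Set.range pw
        · left
          rw [hsPW c' hc' hcv hcr, hsu]
          have := hbub P' c'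
          have := hblb P' u
          omega
        · left
          rw [hsout c' hcr, hsu]
          have := hbub P' c'
          have := hblb P' u
          omega
    rcases hdom1 s hpwworld u v hwinu hwinv with h | h
    · exact hPiirr v (h ▸ hvu)
    · exact hPiasym _ _ hvu h
  -- the two endpoints of the possible winner block
  have hp0pl : pw ⟨0, hl⟩ = pw ⟨l - 1, hl1⟩ ∨ Pi (pw ⟨0, hl⟩) (pw ⟨l - 1, hl1⟩) := by
    rcases Nat.lt_or_ge 1 l with h | h
    · exact Or.inr ((horder _ _).2 (by simp [Fin.lt_def]; omega))
    · exact Or.inl (congrArg pw (Fin.ext (by simp; omega)))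
  have hp0seg : pw ⟨0, hl⟩ ∈ seg Pi (pw ⟨0, hl⟩) (pw ⟨l - 1, hl1⟩) := ⟨Or.inl rfl, hp0pl⟩
  have hplseg : pw ⟨l - 1, hl1⟩ ∈ seg Pi (pw ⟨0, hl⟩) (pw ⟨l - 1, hl1⟩) :=
    ⟨hp0pl.imp Eq.symm id, Or.inl rfl⟩
  -- if the whole segment lies strictly above the block: contradiction
  have hAbove : Pi ck (pw ⟨0, hl⟩) → False := by
    intro hk
    apply hW
    intro a
    apply hBoff
    intro haS
    have h2 : Pi (pw a) (pw ⟨0, hl⟩) := by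
      rcases ((hSmem (pw a)).1 haS).2 with e | e
      · exact e ▸ hk
      · exact hPitr _ _ _ e hk
    have h3 := (horder a ⟨0, hl⟩).1 h2
    rw [Fin.lt_def] at h3
    exact Nat.not_lt_zero _ h3
  -- if the whole segment lies strictly below the block: contradiction
  have hBelow : Pi (pw ⟨l - 1, hl1⟩) cj → False := by
    intro hk
    apply hW
    intro a
    apply hBoff
    intro haS
    have h2 : Pi (pw ⟨l - 1, hl1⟩) (pw a) := by
      rcases ((hSmem (pw a)).1 haS).1 with e | e
      · exact e ▸ hk
      · exact hPitr _ _ _ hk e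
    have h3 := (horder ⟨l - 1, hl1⟩ a).1 h2
    rw [Fin.lt_def] at h3
    have := a.isLt
    simp at h3
    omega
  -- the middle case: cj and ck both inside the block range
  have hMid : ¬ Pi cj (pw ⟨0, hl⟩) → ¬ Pi (pw ⟨l - 1, hl1⟩) ck → False := by
    intro h1 h2
    by_cases hg : ∃ u v : C, u ∈ Set.range pw ∧ v ∈ Set.range pw ∧ Pi v u ∧
        borda P' v + borda Pi u < borda P' u + borda Pi v
    · obtain ⟨u, v, hu, hv, hvu, hkey⟩ := hg
      exact hCon u v hu hv hvu hkey
    · push_neg at hg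
      apply hW
      have h0 : borda P' (pw ⟨0, hl⟩) ≤ borda Pi (pw ⟨0, hl⟩) := by
        by_cases hmem : pw ⟨0, hl⟩ ∈ seg Pi cj ck
        · rcases ((hSmem _).1 hmem).1 with e | e
          · rw [e]; exact hCj
          · exact absurd e h1
        · exact (hBoff _ hmem).le
      have hLst : borda Pi (pw ⟨l - 1, hl1⟩) ≤ borda P' (pw ⟨l - 1, hl1⟩) := by
        by_cases hmem : pw ⟨l - 1, hl1⟩ ∈ seg Pi cj ck
        · rcases ((hSmem _).1 hmem).2 with e | e
          · rw [e]; exact hCk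
          · exact absurd e h2
        · exact (hBoff _ hmem).ge
      intro a
      have m1 : pw a = pw ⟨0, hl⟩ ∨
          borda P' (pw a) + borda Pi (pw ⟨0, hl⟩) ≤
            borda P' (pw ⟨0, hl⟩) + borda Pi (pw a) := by
        rcases Nat.eq_zero_or_pos a.val with h | h
        · exact Or.inl (congrArg pw (Fin.ext h))
        · refine Or.inr (hg (pw a) (pw ⟨0, hl⟩) ⟨a, rfl⟩ ⟨_, rfl⟩ ?_)
          exact (horder _ _).2 (by rw [Fin.lt_def]; simpa using h)
      have m2 : pw a = pw ⟨l - 1, hl1⟩ ∨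
          borda P' (pw ⟨l - 1, hl1⟩) + borda Pi (pw a) ≤
            borda P' (pw a) + borda Pi (pw ⟨l - 1, hl1⟩) := by
        rcases Nat.lt_or_ge a.val (l - 1) with h | h
        · refine Or.inr (hg (pw ⟨l - 1, hl1⟩) (pw a) ⟨_, rfl⟩ ⟨a, rfl⟩ ?_)
          exact (horder _ _).2 (by rw [Fin.lt_def]; simpa using h)
        · exact Or.inl (congrArg pw (Fin.ext (by have := a.isLt; simp; omega)))
      rcases m1 with e1 | i1 <;> rcases m2 with e2 | i2
      · rw [e1] at e2 ⊢; rw [e2] at h0 ⊢; omega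
      · rw [e1] at i2 ⊢; omega
      · rw [e2] at i1 ⊢; omega
      · omega
  -- final case analysis
  by_cases h1 : Pi cj (pw ⟨0, hl⟩)
  · by_cases h2 : Pi (pw ⟨l - 1, hl1⟩) ck
    · exact Or.inl ⟨h1, h2⟩
    · by_cases h3 : ck ∈ seg Pi (pw ⟨0, hl⟩) (pw ⟨l - 1, hl1⟩)
      · exact Or.inr (Or.inl ⟨h1, h3⟩)
      · exfalso
        have hckne : ck ≠ pw ⟨0, hl⟩ := fun e => h3 (e ▸ hp0seg)
        rcases hPit ck (pw ⟨0, hl⟩) hckne with hk | hk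
        · exact hAbove hk
        · apply h3
          refine ⟨Or.inr hk, ?_⟩
          rcases eq_or_ne ck (pw ⟨l - 1, hl1⟩) with e | e
          · exact Or.inl e
          · exact Or.inr ((hPit ck (pw ⟨l - 1, hl1⟩) e).resolve_right h2)
  · by_cases h2 : Pi (pw ⟨l - 1, hl1⟩) ck
    · by_cases h3 : cj ∈ seg Pi (pw ⟨0, hl⟩) (pw ⟨l - 1, hl1⟩)
      · exact Or.inr (Or.inr ⟨h2, h3⟩)
      · exfalso
        have hcjne : cj ≠ pw ⟨l - 1, hl1⟩ := fun e => h3 (e ▸ hplseg)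
        rcases hPit cj (pw ⟨l - 1, hl1⟩) hcjne with hk | hk
        · apply h3
          refine ⟨?_, Or.inr hk⟩
          rcases eq_or_ne cj (pw ⟨0, hl⟩) with e | e
          · exact Or.inl e
          · exact Or.inr ((hPit cj (pw ⟨0, hl⟩) e).resolve_left h1)
        · exact hBelow hk
    · exact (hMid h1 h2).elim
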